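/- Let $B \subset \mathbb{R}^d$ be open and bounded and let $A \subset B$ be relatively convex in $B$. Then the closure $\overline{A}$ is relatively convex in $B$. -/
import Mathlib


theorem stmt_1 (d : ℕ) (A B : Set (EuclideanSpace ℝ (Fin d)))
    (hBopen : IsOpen B) (hBbdd : Bornology.IsBounded B) (hAB : A ⊆ B)
    (hA : ∀ x ∈ A, ∀ y ∈ A, segment ℝ x y ⊆ B → segment ℝ x y ⊆ A) :
    ∀ x ∈ closure A, ∀ y ∈ closure A, segment ℝ x y ⊆ B → segment ℝ x y ⊆ closure A := by
  intro x hx y hy hseg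
  have hcomp : IsCompact (segment ℝ x y) := by
    rw [segment_eq_image]
    exact isCompact_Icc.image (by continuity)
  obtain ⟨δ, hδ, hthick⟩ := hcomp.exists_thickening_subset_open hBopen hseg
  intro z hz
  rw [Metric.mem_closure_iff]
  intro ε hε
  have hε'pos : 0 < min ε δ := lt_min hε hδ
  obtain ⟨x', hx'A, hx'd⟩ := Metric.mem_closure_iff.mp hx _ hε'pos
  obtain ⟨y', hy'A, hy'd⟩ := Metric.mem_closure_iff.mp hy _ hε'pos
  have key : ∀ t s : ℝ, 0 ≤ t → 0 ≤ s → t + s = 1 →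
      dist (t • x + s • y) (t • x' + s • y') < min ε δ := by
    intro t s ht hs hts
    calc dist (t • x + s • y) (t • x' + s • y')
        ≤ dist (t • x) (t • x') + dist (s • y) (s • y') := dist_add_add_le _ _ _ _
      _ = t * dist x x' + s * dist y y' := by
          rw [dist_smul₀, dist_smul₀, Real.norm_of_nonneg ht, Real.norm_of_nonneg hs]
      _ ≤ t * max (dist x x') (dist y y') + s * max (dist x x') (dist y y') := by
          gcongr
          · exact le_max_left _ _
          · exact le_max_right _ _
      _ = max (dist x x') (dist y y') := by rw [← add_mul, hts, one_mul]
      _ < min ε δ := max_lt hx'd hy'd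
  have hsub : segment ℝ x' y' ⊆ B := by
    rintro w ⟨t, s, ht, hs, hts, rfl⟩
    apply hthick
    refine Metric.mem_thickening_iff.mpr ⟨t • x + s • y, ⟨t, s, ht, hs, hts, rfl⟩, ?_⟩
    rw [dist_comm]
    exact (key t s ht hs hts).trans_le (min_le_right _ _)
  have hsubA := hA x' hx'A y' hy'A hsub
  obtain ⟨t, s, ht, hs, hts, rfl⟩ := hz
  exact ⟨t • x' + s • y', hsubA ⟨t, s, ht, hs, hts, rfl⟩,
    (key t s ht hs hts).trans_le (min_le_left _ _)⟩
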